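/- arXiv:1902.08109 — 2 statements merged into one kernel-verified Lean document; each statement's English description precedes it below -/
import Mathlib

section
/- Let b ≥ 2 be an integer and c > 0. Then lim_{h→∞} h·( Σ_{k=0}^{h} e^{c k/h} b^{-k} - b/(b-1) ) = c·b/(b-1)². -/
open Filter
open scoped Topology

lemma geometric_sum_second_order_aux (B E P t : ℝ) (hB : B ≠ 0) (hB1 : B - 1 ≠ 0)
    (hBE : B - E ≠ 0) :
    t * ((P - 1) / (E / B - 1) - B / (B - 1))
      = B * (t * (E - 1)) / ((B - E) * (B - 1)) - t * P * (B / (B - E)) := by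
  have h1 : E / B - 1 = (E - B) / B := by field_simp
  have h2 : E - B ≠ 0 := fun hz => hBE (by linarith)
  rw [h1, div_div_eq_mul_div]
  field_simp
  ring

/-- Second-order evaluation of a geometric-type sum appearing in percolation on
complete `b`-ary trees: `h (∑_{k=0}^h e^{ck/h} b^{-k} - b/(b-1)) → c b/(b-1)²`. -/
theorem geometric_sum_second_order (b : ℕ) (hb : 2 ≤ b) (c : ℝ) (hc : 0 < c) :
    Tendsto (fun h : ℕ =>
        (h : ℝ) * (∑ k ∈ Finset.range (h + 1),
          Real.exp (c * k / h) * ((b : ℝ) ^ k)⁻¹ - b / (b - 1)))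
      atTop (𝓝 (c * b / (b - 1) ^ 2)) := by
  have hb1 : (1 : ℝ) < b := by
    have : (2 : ℝ) ≤ b := by exact_mod_cast hb
    linarith
  have hb0 : (0 : ℝ) < b := by linarith
  have hbne : (b : ℝ) ≠ 0 := ne_of_gt hb0
  have hb1ne : (b : ℝ) - 1 ≠ 0 := sub_ne_zero.mpr (ne_of_gt hb1)
  -- c / h → 0
  have h0 : Tendsto (fun h : ℕ => c / h) atTop (𝓝 0) :=
    tendsto_const_div_atTop_nhds_zero_nat c
  -- exp (c/h) → 1
  have hexp : Tendsto (fun h : ℕ => Real.exp (c / h)) atTop (𝓝 1) := by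
    have := (Real.continuous_exp.tendsto 0).comp h0
    simpa [Function.comp_def] using this
  -- eventually exp (c/h) < b
  have hev : ∀ᶠ h : ℕ in atTop, Real.exp (c / (h : ℝ)) < b :=
    hexp.eventually_lt_const hb1
  -- A h := h * (exp (c/h) - 1) → c
  have hA : Tendsto (fun h : ℕ => (h : ℝ) * (Real.exp (c / h) - 1)) atTop (𝓝 c) := by
    have hslope : Tendsto (slope Real.exp 0) (𝓝[≠] 0) (𝓝 1) := by
      have := hasDerivAt_iff_tendsto_slope.mp (Real.hasDerivAt_exp 0)
      simpa using this
    have h0' : Tendsto (fun h : ℕ => c / (h : ℝ)) atTop (𝓝[≠] (0 : ℝ)) := by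
      refine tendsto_nhdsWithin_iff.mpr ⟨h0, ?_⟩
      filter_upwards [eventually_ge_atTop 1] with h hh
      have hhne : ((h : ℝ)) ≠ 0 := Nat.cast_ne_zero.mpr (by omega)
      exact div_ne_zero hc.ne' hhne
    have h1 : Tendsto (fun h : ℕ => c * slope Real.exp 0 (c / h)) atTop (𝓝 (c * 1)) :=
      (hslope.comp h0').const_mul c
    rw [mul_one] at h1
    refine h1.congr' ?_
    filter_upwards [eventually_ge_atTop 1] with h hh
    have hhne : ((h : ℝ)) ≠ 0 := Nat.cast_ne_zero.mpr (by omega)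
    rw [slope_def_field]
    rw [Real.exp_zero]
    field_simp [hc.ne']
    ring
  -- D h := b - exp (c/h) → b - 1
  have hD : Tendsto (fun h : ℕ => (b : ℝ) - Real.exp (c / h)) atTop (𝓝 ((b : ℝ) - 1)) :=
    tendsto_const_nhds.sub hexp
  -- C h := h * (exp (c/h) / b) ^ (h+1) → 0
  have hC : Tendsto (fun h : ℕ => (h : ℝ) * (Real.exp (c / h) / b) ^ (h + 1))
      atTop (𝓝 0) := by
    have hr0 : (0 : ℝ) ≤ 1 / b := by positivity
    have hr1 : (1 : ℝ) / b < 1 := by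
      rw [div_lt_one hb0]; linarith
    have hg : Tendsto (fun h : ℕ => (Real.exp (2 * c) / b) * ((h : ℝ) * (1 / b) ^ h))
        atTop (𝓝 ((Real.exp (2 * c) / b) * 0)) :=
      (tendsto_self_mul_const_pow_of_lt_one hr0 hr1).const_mul _
    rw [mul_zero] at hg
    refine squeeze_zero' ?_ ?_ hg
    · filter_upwards with h
      positivity
    · filter_upwards [eventually_ge_atTop 1] with h hh
      have hhpos : (0 : ℝ) < h := by exact_mod_cast (by omega : 0 < h)
      have key : Real.exp (c / h) ^ (h + 1) ≤ Real.exp (2 * c) := by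
        rw [← Real.exp_nat_mul]
        apply Real.exp_le_exp.mpr
        rw [Nat.cast_add, Nat.cast_one]
        have h1h : (1 : ℝ) ≤ h := by exact_mod_cast hh
        have h2 : ((h : ℝ) + 1) / h ≤ 2 := by
          rw [div_le_iff₀ hhpos]; linarith
        calc ((h : ℝ) + 1) * (c / h) = c * (((h : ℝ) + 1) / h) := by ring
          _ ≤ c * 2 := by nlinarith
          _ = 2 * c := by ring
      calc (h : ℝ) * (Real.exp (c / h) / b) ^ (h + 1)
          = (h : ℝ) * (Real.exp (c / h) ^ (h + 1) * ((1 / b) ^ h * (1 / b))) := by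
            rw [div_pow, one_div, ← pow_succ, inv_pow, div_eq_mul_inv]
        _ ≤ (h : ℝ) * (Real.exp (2 * c) * ((1 / b) ^ h * (1 / b))) := by
            apply mul_le_mul_of_nonneg_left _ hhpos.le
            apply mul_le_mul_of_nonneg_right key (by positivity)
        _ = Real.exp (2 * c) / b * ((h : ℝ) * (1 / b) ^ h) := by ring
  -- combine
  have hT : Tendsto (fun h : ℕ =>
      (b : ℝ) * ((h : ℝ) * (Real.exp (c / h) - 1)) / (((b : ℝ) - Real.exp (c / h)) * (b - 1))
        - ((h : ℝ) * (Real.exp (c / h) / b) ^ (h + 1)) * (b / ((b : ℝ) - Real.exp (c / h))))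
      atTop (𝓝 ((b : ℝ) * c / (((b : ℝ) - 1) * (b - 1)) - 0 * (b / ((b : ℝ) - 1)))) := by
    refine Tendsto.sub ?_ ?_
    · exact (hA.const_mul _).div (hD.mul_const _) (by
        intro hcontra
        exact hb1ne (by
          rcases mul_eq_zero.mp hcontra with h' | h' <;> [exact h'; exact h']))
    · exact hC.mul (tendsto_const_nhds.div hD hb1ne)
  have hval : (b : ℝ) * c / (((b : ℝ) - 1) * (b - 1)) - 0 * (b / ((b : ℝ) - 1))
      = c * b / ((b : ℝ) - 1) ^ 2 := by ring
  rw [hval] at hT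
  refine hT.congr' ?_
  filter_upwards [eventually_ge_atTop 1, hev] with h hh hEb
  have hhpos : (0 : ℝ) < h := by exact_mod_cast (by omega : 0 < h)
  set E := Real.exp (c / (h : ℝ)) with hE
  have hE0 : 0 < E := Real.exp_pos _
  have hx1 : E / b < 1 := (div_lt_one hb0).mpr hEb
  have hxne : E / (b : ℝ) ≠ 1 := ne_of_lt hx1
  have hsum : ∑ k ∈ Finset.range (h + 1), Real.exp (c * k / h) * ((b : ℝ) ^ k)⁻¹
      = ∑ k ∈ Finset.range (h + 1), (E / b) ^ k := by
    apply Finset.sum_congr rfl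
    intro k _
    rw [div_pow, div_eq_mul_inv, hE, ← Real.exp_nat_mul]
    congr 2
    ring
  rw [hsum, geom_sum_eq hxne]
  have hbEne : (b : ℝ) - E ≠ 0 := ne_of_gt (by linarith)
  have hxmne : E / (b : ℝ) - 1 ≠ 0 := by
    intro hz
    exact hxne (by linarith)
  exact (geometric_sum_second_order_aux (b : ℝ) E ((E / (b : ℝ)) ^ (h + 1)) h hbne hb1ne hbEne).symm
end

section
/- Let b ≥ 2 and h ∈ ℕ with h - m ≥ 0 where m = 2⌊log_b h⌋, let n_{h,1} = (b^{h-m+1} - 1)/(b-1) be the number of vertices of a complete b-ary subtree of height h - m, and let c > 0. Then E[C_{h,1}] = n_{h,1} e^{-c} + n_{h,1} h^{-1} (b-1)^{-1} c e^{-c} + n_{h,1} m h^{-1} c e^{-c} + o(n_{h,1} h^{-1}) as h → ∞, where C_{h,1} is the number of vertices in the root cluster of that subtree under Bernoulli bond percolation with parameter p_h = e^{-c/h}. -/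
open Filter
open scoped Topology

namespace RegSubtreeAux

noncomputable def Mr (b h : ℕ) : ℝ := ((2 * Nat.log b h : ℕ) : ℝ)
noncomputable def Xr (c : ℝ) (h : ℕ) : ℝ := Real.exp (-c / h)
noncomputable def Dr (b : ℕ) (c : ℝ) (h : ℕ) : ℝ := b * Xr c h - 1
noncomputable def Er (b : ℕ) (c : ℝ) (h : ℕ) : ℝ := Real.exp (c * (Mr b h - 1) / h)
noncomputable def ur (c : ℝ) (h : ℕ) : ℝ := h * (1 - Xr c h)
noncomputable def wr (b : ℕ) (c : ℝ) (h : ℕ) : ℝ := h * (Er b c h - 1) - c * (Mr b h - 1)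
noncomputable def Pr (b h : ℕ) : ℝ := (b : ℝ) ^ (h - 2 * Nat.log b h + 1)

/-- The decomposition of the normalized error into pieces with elementary limits. -/
noncomputable def Phi (b : ℕ) (c : ℝ) (h : ℕ) : ℝ :=
  Real.exp (-c) * (((b : ℝ) - 1) * wr b c h / Dr b c h
    + (c * (Mr b h - 1) / h) * ((b : ℝ) * ur c h / Dr b c h)
    + (b : ℝ) * ur c h / Dr b c h - c / ((b : ℝ) - 1) - c)
  + ((h : ℝ) / (Pr b h - 1)) * (((b : ℝ) - 1) / Dr b c h) * (Real.exp (-c) * Er b c h - 1)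

lemma natLog_le (b : ℕ) (hb : 2 ≤ b) (h : ℕ) :
    ((Nat.log b h : ℝ)) ≤ Real.log h / Real.log 2 := by
  calc ((Nat.log b h : ℝ)) ≤ ((Nat.log 2 h : ℝ)) := by
        exact_mod_cast Nat.log_anti_left (by norm_num) hb
    _ ≤ Real.logb 2 h := Real.natLog_le_logb h 2
    _ = Real.log h / Real.log 2 := by rw [Real.logb]

lemma logpow_div (b : ℕ) (hb : 2 ≤ b) (n : ℕ) :
    Tendsto (fun h : ℕ => ((Nat.log b h : ℝ)) ^ n / h) atTop (𝓝 0) := by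
  have base : Tendsto (fun x : ℝ => Real.log x ^ n / x) atTop (𝓝 0) := by
    simpa using Real.tendsto_pow_log_div_mul_add_atTop 1 0 n one_ne_zero
  have base2 : Tendsto (fun h : ℕ => Real.log h ^ n / h * ((1 / Real.log 2) ^ n))
      atTop (𝓝 (0 * (1 / Real.log 2) ^ n)) :=
    (base.comp tendsto_natCast_atTop_atTop).mul_const _
  rw [zero_mul] at base2
  apply squeeze_zero' ?_ ?_ base2
  · filter_upwards [eventually_ge_atTop 1] with h hh
    positivity
  · filter_upwards [eventually_ge_atTop 1] with h hh
    have h1 : (1 : ℝ) ≤ (h : ℝ) := by exact_mod_cast hh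
    have hlog2 : (0 : ℝ) < Real.log 2 := Real.log_pos (by norm_num)
    have hle : ((Nat.log b h : ℝ)) ^ n ≤ (Real.log h / Real.log 2) ^ n :=
      pow_le_pow_left₀ (by positivity) (natLog_le b hb h) n
    calc ((Nat.log b h : ℝ)) ^ n / h ≤ (Real.log h / Real.log 2) ^ n / h := by
          have h0 : (0 : ℝ) < (h : ℝ) := by positivity
          gcongr
      _ = Real.log h ^ n / h * ((1 / Real.log 2) ^ n) := by
          rw [div_pow]; ring

variable (b : ℕ) (c : ℝ)

lemma tendsto_Mh1 (hb : 2 ≤ b) :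
    Tendsto (fun h : ℕ => c * (Mr b h - 1) / h) atTop (𝓝 0) := by
  have t1 := (logpow_div b hb 1).const_mul (2 * c)
  have t2 := tendsto_const_div_atTop_nhds_zero_nat c
  have t3 := t1.sub t2
  rw [mul_zero, sub_zero] at t3
  refine t3.congr' ?_
  filter_upwards [eventually_ge_atTop 1] with h hh
  have hhne : (h : ℝ) ≠ 0 := by positivity
  simp only [Mr]
  push_cast
  field_simp

lemma tendsto_M2 (hb : 2 ≤ b) :
    Tendsto (fun h : ℕ => (Mr b h - 1) ^ 2 / h) atTop (𝓝 0) := by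
  have t1 := ((logpow_div b hb 2).const_mul 4).sub ((logpow_div b hb 1).const_mul 4)
  have t2 := t1.add (tendsto_const_div_atTop_nhds_zero_nat 1)
  rw [show (4:ℝ) * 0 - 4 * 0 + 0 = 0 by norm_num] at t2
  refine t2.congr' ?_
  filter_upwards [eventually_ge_atTop 1] with h hh
  have hhne : (h : ℝ) ≠ 0 := by positivity
  simp only [Mr]
  push_cast
  field_simp
  ring

lemma tendsto_X : Tendsto (fun h : ℕ => Real.exp (-c / h)) atTop (𝓝 1) := by
  have h1 : Tendsto (fun h : ℕ => -c / (h : ℝ)) atTop (𝓝 0) :=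
    tendsto_const_div_atTop_nhds_zero_nat (-c)
  have := (Real.continuous_exp.tendsto 0).comp h1
  simpa [Function.comp_def] using this

lemma tendsto_D : Tendsto (Dr b c) atTop (𝓝 ((b : ℝ) - 1)) := by
  have := ((tendsto_X c).const_mul (b : ℝ)).sub_const 1
  rw [mul_one] at this
  exact this

lemma tendsto_E (hb : 2 ≤ b) : Tendsto (Er b c) atTop (𝓝 1) := by
  have := (Real.continuous_exp.tendsto 0).comp (tendsto_Mh1 b c hb)
  rw [Real.exp_zero] at this; exact this

lemma tendsto_u (hc : 0 < c) : Tendsto (ur c) atTop (𝓝 c) := by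
  have hd := Real.hasDerivAt_exp 0
  have hslope := hasDerivAt_iff_tendsto_slope.mp hd
  have hcomp : Tendsto (fun h : ℕ => -c / (h : ℝ)) atTop (𝓝[≠] (0 : ℝ)) := by
    apply tendsto_nhdsWithin_of_tendsto_nhds_of_eventually_within _
      (tendsto_const_div_atTop_nhds_zero_nat (-c))
    filter_upwards [eventually_ge_atTop 1] with h hh
    have : (0 : ℝ) < (h : ℝ) := by exact_mod_cast hh
    simp only [Set.mem_compl_iff, Set.mem_singleton_iff]
    intro hcontra
    rw [div_eq_zero_iff] at hcontra
    rcases hcontra with h1 | h2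
    · linarith
    · linarith
  have key := (hslope.comp hcomp).const_mul c
  rw [Real.exp_zero, mul_one] at key
  refine key.congr' ?_
  filter_upwards [eventually_ge_atTop 1] with h hh
  have hne : (h : ℝ) ≠ 0 := by positivity
  have hcne : c ≠ 0 := ne_of_gt hc
  simp only [Function.comp, slope_def_field, ur, Xr]
  rw [Real.exp_zero]
  field_simp [hcne]
  ring

lemma tendsto_w (hb : 2 ≤ b) (hc : 0 < c) : Tendsto (wr b c) atTop (𝓝 0) := by
  have hg : Tendsto (fun h : ℕ => 3 / 4 * c ^ 2 * ((Mr b h - 1) ^ 2 / h)) atTop (𝓝 0) := by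
    have := (tendsto_M2 b hb).const_mul (3 / 4 * c ^ 2)
    rwa [mul_zero] at this
  have h01 : ∀ᶠ x : ℝ in 𝓝 (0 : ℝ), |x| ≤ 1 := by
    filter_upwards [Metric.ball_mem_nhds (0 : ℝ) one_pos] with x hx
    rw [Metric.mem_ball, Real.dist_eq, sub_zero] at hx
    exact hx.le
  apply squeeze_zero_norm' ?_ hg
  filter_upwards [eventually_ge_atTop 1, (tendsto_Mh1 b c hb).eventually h01] with h hh hs
  have hhpos : (0 : ℝ) < (h : ℝ) := by exact_mod_cast hh
  have hhne : (h : ℝ) ≠ 0 := ne_of_gt hhpos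
  set s : ℝ := c * (Mr b h - 1) / h with hsdef
  have hcm : c * (Mr b h - 1) = (h : ℝ) * s := by rw [hsdef]; field_simp
  have hexp := Real.exp_bound hs (by norm_num : 0 < 2)
  have hexp' : |Real.exp s - (1 + s)| ≤ |s| ^ 2 * (3 / 4) := by
    have hsum2 : ∑ m ∈ Finset.range 2, s ^ m / m.factorial = 1 + s := by
      simp [Finset.sum_range_succ]
    rw [hsum2] at hexp
    convert hexp using 2
    norm_num
  simp only [wr, Er, ← hsdef]
  rw [hcm]
  have heq : (h : ℝ) * (Real.exp s - 1) - (h : ℝ) * s = (h : ℝ) * (Real.exp s - (1 + s)) := by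
    ring
  rw [heq, Real.norm_eq_abs, abs_mul, abs_of_pos hhpos]
  calc (h : ℝ) * |Real.exp s - (1 + s)| ≤ (h : ℝ) * (|s| ^ 2 * (3 / 4)) := by gcongr
    _ = 3 / 4 * c ^ 2 * ((Mr b h - 1) ^ 2 / h) := by
        rw [sq_abs, hsdef]; field_simp

lemma tendsto_z (hb : 2 ≤ b)
    (hmev : ∀ᶠ h : ℕ in atTop, 2 * Nat.log b h ≤ h) :
    Tendsto (fun h : ℕ => (h : ℝ) / (Pr b h - 1)) atTop (𝓝 0) := by
  have hb2 : (2 : ℝ) ≤ (b : ℝ) := by exact_mod_cast hb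
  have hP2 : ∀ h : ℕ, (2 : ℝ) ≤ Pr b h := fun h =>
    hb2.trans (le_self_pow₀ (by linarith) (Nat.succ_ne_zero _))
  have hcube : Tendsto (fun n : ℕ => (n : ℝ) ^ 3 / 2 ^ n) atTop (𝓝 0) :=
    tendsto_pow_const_div_const_pow_of_one_lt 3 one_lt_two
  apply squeeze_zero' ?_ ?_ hcube
  · filter_upwards with h
    have h2 := hP2 h
    have hnum : (0 : ℝ) ≤ (h : ℝ) := Nat.cast_nonneg h
    have hden : (0 : ℝ) < Pr b h - 1 := by linarith
    positivity
  · filter_upwards [eventually_ge_atTop 1, hmev] with h hh hm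
    have hhpos : (0 : ℝ) < (h : ℝ) := by exact_mod_cast hh
    set N : ℕ := h - 2 * Nat.log b h with hN
    have hNm : N + 2 * Nat.log b h = h := Nat.sub_add_cancel hm
    have h2m : (2 : ℕ) ^ (2 * Nat.log b h) ≤ h ^ 2 := by
      have l1 : Nat.log b h ≤ Nat.log 2 h := Nat.log_anti_left (by norm_num) hb
      have l2 : (2 : ℕ) ^ Nat.log 2 h ≤ h := Nat.pow_log_le_self 2 (by omega)
      calc (2 : ℕ) ^ (2 * Nat.log b h) = (2 ^ Nat.log b h) ^ 2 := by
            rw [mul_comm, pow_mul]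
        _ ≤ ((2 : ℕ) ^ Nat.log 2 h) ^ 2 :=
            Nat.pow_le_pow_left (Nat.pow_le_pow_right (by norm_num) l1) 2
        _ ≤ h ^ 2 := Nat.pow_le_pow_left l2 2
    have h2mR : (2 : ℝ) ^ (2 * Nat.log b h) ≤ (h : ℝ) ^ 2 := by exact_mod_cast h2m
    have hNP : (2 : ℝ) ^ N ≤ (b : ℝ) ^ (N + 1) - 1 := by
      have e1 : (1 : ℝ) ≤ (2 : ℝ) ^ N := one_le_pow₀ (by norm_num)
      have e2 : (2 : ℝ) ^ (N + 1) ≤ (b : ℝ) ^ (N + 1) := by gcongr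
      have e3 : (2 : ℝ) ^ (N + 1) = 2 * 2 ^ N := by rw [pow_succ]; ring
      linarith
    have hkey : (2 : ℝ) ^ h ≤ ((b : ℝ) ^ (N + 1) - 1) * (h : ℝ) ^ 2 := by
      calc (2 : ℝ) ^ h = 2 ^ N * 2 ^ (2 * Nat.log b h) := by rw [← pow_add, hNm]
        _ ≤ 2 ^ N * (h : ℝ) ^ 2 := by gcongr
        _ ≤ ((b : ℝ) ^ (N + 1) - 1) * (h : ℝ) ^ 2 := by gcongr
    have hPpos : (0 : ℝ) < Pr b h - 1 := by linarith [hP2 h]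
    have hPr : Pr b h = (b : ℝ) ^ (N + 1) := rfl
    rw [hPr] at hPpos ⊢
    rw [div_le_div_iff₀ hPpos (by positivity)]
    calc (h : ℝ) * 2 ^ h ≤ (h : ℝ) * (((b : ℝ) ^ (N + 1) - 1) * (h : ℝ) ^ 2) := by gcongr
      _ = (h : ℝ) ^ 3 * ((b : ℝ) ^ (N + 1) - 1) := by ring

end RegSubtreeAux

open RegSubtreeAux

/-- Expected size of the root cluster of a complete `b`-ary subtree of height `h - m`,
`m = 2⌊log_b h⌋`, under percolation with parameter `p_h = e^{-c/h}`:
`E[C_{h,1}] = n_{h,1} e^{-c} + n_{h,1} h⁻¹ (b-1)⁻¹ c e^{-c} + n_{h,1} m h⁻¹ c e^{-c}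
             + o(n_{h,1} h⁻¹)` as `h → ∞`. -/
theorem regular_subtree_cluster_expectation (b : ℕ) (hb : 2 ≤ b) (c : ℝ) (hc : 0 < c) :
    Tendsto (fun h : ℕ =>
        ((∑ k ∈ Finset.range (h - 2 * Nat.log b h + 1),
            (b : ℝ) ^ k * Real.exp (-c * k / h))
          - (((b : ℝ) ^ (h - 2 * Nat.log b h + 1) - 1) / (b - 1)) * Real.exp (-c)
          - (((b : ℝ) ^ (h - 2 * Nat.log b h + 1) - 1) / (b - 1)) * (h : ℝ)⁻¹
              * ((b : ℝ) - 1)⁻¹ * c * Real.exp (-c)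
          - (((b : ℝ) ^ (h - 2 * Nat.log b h + 1) - 1) / (b - 1))
              * (2 * Nat.log b h : ℕ) * (h : ℝ)⁻¹ * c * Real.exp (-c))
        / ((((b : ℝ) ^ (h - 2 * Nat.log b h + 1) - 1) / (b - 1)) * (h : ℝ)⁻¹))
      atTop (𝓝 0) := by
  have hb2 : (2 : ℝ) ≤ (b : ℝ) := by exact_mod_cast hb
  have hbne : (b : ℝ) - 1 ≠ 0 := by linarith
  have hM1 : Tendsto (fun h : ℕ => Mr b h / h) atTop (𝓝 0) := by
    have t1 := (logpow_div b hb 1).const_mul 2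
    rw [mul_zero] at t1
    refine t1.congr fun h => ?_
    simp only [Mr]; push_cast; ring
  have hmev : ∀ᶠ h : ℕ in atTop, 2 * Nat.log b h ≤ h := by
    filter_upwards [eventually_ge_atTop 1,
      hM1.eventually (eventually_lt_nhds zero_lt_one)] with h hh hlt
    have hhpos : (0 : ℝ) < (h : ℝ) := by exact_mod_cast hh
    have hlt2 : Mr b h < (h : ℝ) := (div_lt_one hhpos).mp hlt
    simp only [Mr] at hlt2
    exact_mod_cast hlt2.le
  have hDT := tendsto_D b c
  have hET := tendsto_E b c hb
  have huT := tendsto_u c hc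
  have hwT := tendsto_w b c hb hc
  have hzT := tendsto_z b hb hmev
  have hMh1 := tendsto_Mh1 b c hb
  -- limit of Phi
  have hPhi : Tendsto (fun h : ℕ => Phi b c h) atTop
      (𝓝 (Real.exp (-c) * (((b : ℝ) - 1) * 0 / ((b : ℝ) - 1)
        + 0 * ((b : ℝ) * c / ((b : ℝ) - 1))
        + (b : ℝ) * c / ((b : ℝ) - 1) - c / ((b : ℝ) - 1) - c)
      + 0 * (((b : ℝ) - 1) / ((b : ℝ) - 1)) * (Real.exp (-c) * 1 - 1))) := by
    simp only [Phi]
    exact (tendsto_const_nhds.mul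
      (((((tendsto_const_nhds.mul hwT).div hDT hbne).add
          (hMh1.mul ((tendsto_const_nhds.mul huT).div hDT hbne))).add
        ((tendsto_const_nhds.mul huT).div hDT hbne)).sub tendsto_const_nhds |>.sub
          tendsto_const_nhds)).add
      ((hzT.mul (tendsto_const_nhds.div hDT hbne)).mul
        ((tendsto_const_nhds.mul hET).sub tendsto_const_nhds))
  have hval : Real.exp (-c) * (((b : ℝ) - 1) * 0 / ((b : ℝ) - 1)
        + 0 * ((b : ℝ) * c / ((b : ℝ) - 1))
        + (b : ℝ) * c / ((b : ℝ) - 1) - c / ((b : ℝ) - 1) - c)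
      + 0 * (((b : ℝ) - 1) / ((b : ℝ) - 1)) * (Real.exp (-c) * 1 - 1) = 0 := by
    field_simp
    ring
  rw [hval] at hPhi
  refine hPhi.congr' ?_
  filter_upwards [eventually_ge_atTop 1, hmev,
    (tendsto_X c).eventually (eventually_gt_nhds (by norm_num : (3 / 4 : ℝ) < 1))]
    with h hh hm hX34
  have hhpos : (0 : ℝ) < (h : ℝ) := by exact_mod_cast hh
  have hhne : (h : ℝ) ≠ 0 := ne_of_gt hhpos
  have hDpos : (0 : ℝ) < (b : ℝ) * Real.exp (-c / h) - 1 := by nlinarith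
  have hDne : (b : ℝ) * Real.exp (-c / h) - 1 ≠ 0 := ne_of_gt hDpos
  have hq1 : (b : ℝ) * Real.exp (-c / h) ≠ 1 := by intro hcon; rw [hcon] at hDpos; norm_num at hDpos
  have hPne : (b : ℝ) ^ (h - 2 * Nat.log b h + 1) - 1 ≠ 0 := by
    have : (2 : ℝ) ≤ (b : ℝ) ^ (h - 2 * Nat.log b h + 1) :=
      hb2.trans (le_self_pow₀ (by linarith) (Nat.succ_ne_zero _))
    intro hcon; rw [sub_eq_zero] at hcon; rw [hcon] at this; norm_num at this
  have hcast : ((h - 2 * Nat.log b h : ℕ) : ℝ) = (h : ℝ) - ((2 * Nat.log b h : ℕ) : ℝ) := by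
    exact Nat.cast_sub hm
  have hsum : ∑ k ∈ Finset.range (h - 2 * Nat.log b h + 1), (b : ℝ) ^ k * Real.exp (-c * k / h)
      = ((b : ℝ) ^ (h - 2 * Nat.log b h + 1)
          * (Real.exp (-c) * Real.exp (c * (((2 * Nat.log b h : ℕ) : ℝ) - 1) / h)) - 1)
        / ((b : ℝ) * Real.exp (-c / h) - 1) := by
    have hstep : ∀ k ∈ Finset.range (h - 2 * Nat.log b h + 1),
        (b : ℝ) ^ k * Real.exp (-c * k / h) = ((b : ℝ) * Real.exp (-c / h)) ^ k := by
      intro k _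
      rw [mul_pow, ← Real.exp_nat_mul]
      congr 1
      ring
    rw [Finset.sum_congr rfl hstep, geom_sum_eq hq1]
    congr 2
    rw [mul_pow, ← Real.exp_nat_mul, ← Real.exp_add]
    congr 1
    push_cast [hcast]
    field_simp
    ring
  -- final algebraic identity
  simp only [Phi, wr, ur, Er, Xr, Dr, Mr, Pr]
  rw [hsum]
  push_cast [hcast] at hPne ⊢
  have hDne' : (b : ℝ) * Real.exp (-(c / h)) - 1 ≠ 0 := by rwa [neg_div] at hDne
  field_simp
  ring
end
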